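/- Let φ be a quantum channel on M_d(ℂ) whose determinant (as a ℂ-linear endomorphism of M_d(ℂ)) is nonzero. Suppose there exist n ≥ 1 and a matrix A ∈ M_d(ℂ) with A positive semidefinite, A ≠ 0, det A = 0, and φⁿ(A) = A (a semipositive fixed point of some power of φ). Then φ is entanglement-saving: for every N ≥ 1, the Choi matrix of φ^N is not separable. -/

import Mathlib

open Matrix Kronecker
open scoped ComplexOrder

/-- A bipartite matrix on `ℂ^{d₁} ⊗ ℂ^{d₂}` is separable if it is a finite sum of
Kronecker products of positive semidefinite matrices. -/
def MatSep {d₁ d₂ : ℕ} (ρ : Matrix (Fin d₁ × Fin d₂) (Fin d₁ × Fin d₂) ℂ) : Prop :=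
  ∃ (k : ℕ) (A : Fin k → Matrix (Fin d₁) (Fin d₁) ℂ) (B : Fin k → Matrix (Fin d₂) (Fin d₂) ℂ),
    (∀ i, (A i).PosSemidef) ∧ (∀ i, (B i).PosSemidef) ∧ ρ = ∑ i, A i ⊗ₖ B i

/-- The Choi matrix `C(φ) = Σ_{i,j} φ(E_{ij}) ⊗ E_{ij}` of a linear map on `M_d(ℂ)`. -/
noncomputable def choi {d : ℕ} (φ : Matrix (Fin d) (Fin d) ℂ →ₗ[ℂ] Matrix (Fin d) (Fin d) ℂ) :
    Matrix (Fin d × Fin d) (Fin d × Fin d) ℂ :=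
  ∑ i : Fin d, ∑ j : Fin d, φ (single i j 1) ⊗ₖ single i j (1 : ℂ)

/-- A quantum channel: trace-preserving and completely positive (positive semidefinite
Choi matrix). -/
def IsQChannel {d : ℕ} (φ : Matrix (Fin d) (Fin d) ℂ →ₗ[ℂ] Matrix (Fin d) (Fin d) ℂ) : Prop :=
  (∀ X, (φ X).trace = X.trace) ∧ (choi φ).PosSemidef

/-! ### Auxiliary lemmas -/

lemma choi_apply' {d : ℕ} (φ : Matrix (Fin d) (Fin d) ℂ →ₗ[ℂ] Matrix (Fin d) (Fin d) ℂ)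
    (a i b j : Fin d) :
    choi φ (a, i) (b, j) = φ (single i j 1) a b := by
  simp [choi, Matrix.sum_apply, kroneckerMap_apply, single, Matrix.of_apply, ite_and,
    mul_ite, mul_one, mul_zero]

lemma map_expand' {d : ℕ} (φ : Matrix (Fin d) (Fin d) ℂ →ₗ[ℂ] Matrix (Fin d) (Fin d) ℂ)
    (X : Matrix (Fin d) (Fin d) ℂ) :
    φ X = ∑ i : Fin d, ∑ j : Fin d, X i j • φ (single i j 1) := by
  conv_lhs => rw [matrix_eq_sum_single X]
  rw [map_sum]
  refine Finset.sum_congr rfl fun i _ => ?_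
  rw [map_sum]
  refine Finset.sum_congr rfl fun j _ => ?_
  rw [show single i j (X i j) = X i j • single i j (1:ℂ) by
    rw [smul_single, smul_eq_mul, mul_one], _root_.map_smul]

lemma action_of_choi' {d k : ℕ} (φ : Matrix (Fin d) (Fin d) ℂ →ₗ[ℂ] Matrix (Fin d) (Fin d) ℂ)
    (R : Fin k → Matrix (Fin d) (Fin d) ℂ) (B : Fin k → Matrix (Fin d) (Fin d) ℂ)
    (h : choi φ = ∑ t, R t ⊗ₖ B t) (X : Matrix (Fin d) (Fin d) ℂ) :
    φ X = ∑ t, ((B t)ᵀ * X).trace • R t := by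
  have hstd : ∀ i j : Fin d, φ (single i j 1) = ∑ t, B t i j • R t := by
    intro i j
    ext a b
    have := congrFun (congrFun h (a, i)) (b, j)
    rw [choi_apply'] at this
    rw [this]
    simp [Matrix.sum_apply, kroneckerMap_apply, mul_comm]
  have htr : ∀ t, ((B t)ᵀ * X).trace = ∑ i : Fin d, ∑ j : Fin d, B t i j * X i j := by
    intro t
    simp only [Matrix.trace, Matrix.diag, Matrix.mul_apply, Matrix.transpose_apply]
    rw [Finset.sum_comm]
  rw [map_expand' φ X]
  simp_rw [hstd, Finset.smul_sum, htr, Finset.sum_smul, smul_smul]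
  simp only [Finset.sum_comm (γ := Fin d) (α := Fin k)]
  refine Finset.sum_congr rfl fun t _ => Finset.sum_congr rfl fun i _ =>
    Finset.sum_congr rfl fun j _ => by rw [mul_comm]

section
open scoped MatrixOrder
lemma posSemidef_iff_eq_transpose_mul_self {n : Type*} [Fintype n] [DecidableEq n]
    {A : Matrix n n ℂ} : A.PosSemidef ↔ ∃ B : Matrix n n ℂ, A = Bᴴ * B := by
  constructor
  · intro hA
    have h0 : 0 ≤ A := Matrix.nonneg_iff_posSemidef.mpr hA
    refine ⟨CFC.sqrt A, ?_⟩
    rw [← Matrix.star_eq_conjTranspose, (CFC.sqrt_nonneg A).isSelfAdjoint.star_eq,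
      CFC.sqrt_mul_sqrt_self A h0]
  · rintro ⟨B, rfl⟩
    exact posSemidef_conjTranspose_mul_self B
end

set_option maxHeartbeats 1000000 in
lemma posMap' {d : ℕ} (φ : Matrix (Fin d) (Fin d) ℂ →ₗ[ℂ] Matrix (Fin d) (Fin d) ℂ)
    (hc : (choi φ).PosSemidef) {X : Matrix (Fin d) (Fin d) ℂ} (hX : X.PosSemidef) :
    (φ X).PosSemidef := by
  obtain ⟨N, hN⟩ := posSemidef_iff_eq_transpose_mul_self.mp hc
  set K : (Fin d × Fin d) → Matrix (Fin d) (Fin d) ℂ :=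
    fun t => Matrix.of fun a i => (starRingEnd ℂ) (N t (a, i)) with hK
  have hφK : φ X = ∑ t : Fin d × Fin d, K t * X * (K t)ᴴ := by
    ext a b
    rw [map_expand']
    have hchoi : ∀ i j : Fin d, φ (single i j 1) a b
        = ∑ t : Fin d × Fin d, (starRingEnd ℂ) (N t (a, i)) * N t (b, j) := by
      intro i j
      rw [← choi_apply', hN]
      simp [Matrix.mul_apply, conjTranspose_apply]
    simp only [Matrix.sum_apply, Matrix.smul_apply, smul_eq_mul, hchoi, Finset.mul_sum,
      Matrix.mul_apply, conjTranspose_apply, hK, Matrix.of_apply, Finset.sum_mul]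
    simp only [Finset.sum_comm (γ := Fin d) (α := Fin d × Fin d)]
    refine Finset.sum_congr rfl fun t _ => ?_
    conv_rhs => rw [Finset.sum_comm]
    refine Finset.sum_congr rfl fun i _ => Finset.sum_congr rfl fun j _ => ?_
    simp only [starRingEnd_apply, star_star]; ring
  rw [hφK]
  apply Finset.sum_induction _ _ (fun A B hA hB => hA.add hB) Matrix.PosSemidef.zero
  intro t _
  exact hX.mul_mul_conjTranspose_same (K t)

lemma pow_posMap' {d : ℕ} (φ : Matrix (Fin d) (Fin d) ℂ →ₗ[ℂ] Matrix (Fin d) (Fin d) ℂ)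
    (hc : (choi φ).PosSemidef) (m : ℕ) {X : Matrix (Fin d) (Fin d) ℂ} (hX : X.PosSemidef) :
    ((φ ^ m) X).PosSemidef := by
  induction m with
  | zero => simpa using hX
  | succ m ih =>
    rw [pow_succ', Module.End.mul_apply]
    exact posMap' φ hc ih

/-- Matrices supported on a finset of index pairs. -/
noncomputable def matSub (d : ℕ) (s : Finset (Fin d × Fin d)) :
    Submodule ℂ (Matrix (Fin d) (Fin d) ℂ) where
  carrier := {X | ∀ p : Fin d × Fin d, p ∉ s → X p.1 p.2 = 0}
  add_mem' := by
    intro X Y hX hY p hp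
    simp [Matrix.add_apply, hX p hp, hY p hp]
  zero_mem' := by intro p hp; simp
  smul_mem' := by
    intro c X hX p hp
    simp [Matrix.smul_apply, hX p hp]

noncomputable def matSubEquiv (d : ℕ) (s : Finset (Fin d × Fin d)) :
    (matSub d s) ≃ₗ[ℂ] (s → ℂ) where
  toFun X p := (X : Matrix (Fin d) (Fin d) ℂ) p.1.1 p.1.2
  map_add' X Y := by ext p; simp
  map_smul' c X := by ext p; simp
  invFun f := ⟨Matrix.of fun a b => if h : (a, b) ∈ s then f ⟨(a, b), h⟩ else 0, by
    intro p hp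
    simp only [Matrix.of_apply]
    rw [dif_neg]
    simpa using hp⟩
  left_inv X := by
    ext a b
    simp only [Matrix.of_apply]
    by_cases h : (a, b) ∈ s
    · rw [dif_pos h]
    · rw [dif_neg h]
      exact (X.2 (a, b) h).symm
  right_inv f := by
    ext p
    simp only [Matrix.of_apply]
    rw [dif_pos]

lemma finrank_matSub (d : ℕ) (s : Finset (Fin d × Fin d)) :
    Module.finrank ℂ (matSub d s) = s.card := by
  rw [LinearEquiv.finrank_eq (matSubEquiv d s), Module.finrank_fintype_fun_eq_card,
    Fintype.card_coe]

lemma psd_diag_nonneg {d : ℕ} {M : Matrix (Fin d) (Fin d) ℂ} (hM : M.PosSemidef) (p : Fin d) :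
    0 ≤ M p p := by
  exact hM.diag_nonneg

lemma psd_row_eq_zero {d : ℕ} {M : Matrix (Fin d) (Fin d) ℂ} (hM : M.PosSemidef) (p : Fin d)
    (hp : M p p = 0) (q : Fin d) : M p q = 0 ∧ M q p = 0 := by
  obtain ⟨C, hC⟩ := posSemidef_iff_eq_transpose_mul_self.mp hM
  have hcol : ∀ t, C t p = 0 := by
    have h0 : ∑ t, (starRingEnd ℂ) (C t p) * C t p = 0 := by
      rw [hC] at hp
      simpa [Matrix.mul_apply, conjTranspose_apply] using hp
    intro t
    have hnn : ∀ t : Fin d, 0 ≤ (starRingEnd ℂ) (C t p) * C t p := fun t => by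
      rw [starRingEnd_apply]; exact star_mul_self_nonneg (C t p)
    have := (Finset.sum_eq_zero_iff_of_nonneg (fun t _ => hnn t)).mp h0 t (Finset.mem_univ t)
    rw [starRingEnd_apply] at this
    rcases mul_eq_zero.mp this with h | h
    · exact star_eq_zero.mp h
    · exact h
  constructor <;> rw [hC] <;> simp [Matrix.mul_apply, conjTranspose_apply, hcol]

lemma core_lemma {d : ℕ} (lam : Fin d → ℝ) (hlam : ∀ i, 0 ≤ lam i)
    (h0 : ∃ i, lam i = 0) (h1 : ∃ i, lam i ≠ 0)
    (ψ : Matrix (Fin d) (Fin d) ℂ →ₗ[ℂ] Matrix (Fin d) (Fin d) ℂ)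
    (hinj : Function.Injective ψ)
    {k : ℕ} (F R : Fin k → Matrix (Fin d) (Fin d) ℂ)
    (hF : ∀ i, (F i).PosSemidef) (hR : ∀ i, (R i).PosSemidef)
    (hdec : ∀ X, ψ X = ∑ i, (F i * X).trace • R i)
    (hfix : ψ (Matrix.diagonal fun i => (lam i : ℂ)) = Matrix.diagonal fun i => (lam i : ℂ)) :
    False := by
  classical
  set D : Matrix (Fin d) (Fin d) ℂ := Matrix.diagonal fun i => (lam i : ℂ) with hD
  set Z : Finset (Fin d) := Finset.univ.filter (fun i => lam i = 0) with hZ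
  set γ : Fin k → ℂ := fun i => (F i * D).trace with hγ
  have hmemZ : ∀ p : Fin d, p ∈ Z ↔ lam p = 0 := by
    intro p; simp [hZ]
  have htr : ∀ i, γ i = ∑ p, F i p p * (lam p : ℂ) := by
    intro i
    simp [hγ, Matrix.trace, Matrix.diag, hD, Matrix.mul_diagonal]
  have hlamC : ∀ p, 0 ≤ ((lam p : ℝ) : ℂ) := by
    intro p
    rw [Complex.zero_le_real]
    exact hlam p
  have hγnn : ∀ i, 0 ≤ γ i := by
    intro i
    rw [htr]
    exact Finset.sum_nonneg fun p _ => mul_nonneg (psd_diag_nonneg (hF i) p) (hlamC p)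
  have hfixdiag : ∀ p ∈ Z, ∑ i, γ i * R i p p = 0 := by
    intro p hp
    have := congrFun (congrFun (hdec D ▸ hfix) p) p
    rw [Matrix.sum_apply] at this
    simp only [Matrix.smul_apply, smul_eq_mul] at this
    rw [this, hD, Matrix.diagonal_apply_eq, (hmemZ p).mp hp, Complex.ofReal_zero]
  have hRdiag : ∀ i, γ i ≠ 0 → ∀ p ∈ Z, R i p p = 0 := by
    intro i hγi p hp
    have h := (Finset.sum_eq_zero_iff_of_nonneg (fun i _ =>
      mul_nonneg (hγnn i) (psd_diag_nonneg (hR i) p))).mp (hfixdiag p hp) i (Finset.mem_univ i)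
    rcases mul_eq_zero.mp h with h' | h'
    · exact absurd h' hγi
    · exact h'
  have hFdiag : ∀ i, γ i = 0 → ∀ p, p ∉ Z → F i p p = 0 := by
    intro i hγi p hp
    have h0' : ∑ p, F i p p * (lam p : ℂ) = 0 := by rw [← htr]; exact hγi
    have h := (Finset.sum_eq_zero_iff_of_nonneg (fun p _ =>
      mul_nonneg (psd_diag_nonneg (hF i) p) (hlamC p))).mp h0' p (Finset.mem_univ p)
    rcases mul_eq_zero.mp h with h' | h'
    · exact h'
    · exfalso
      apply hp
      rw [hmemZ]
      exact_mod_cast h'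
  set sW : Finset (Fin d × Fin d) := (Z ×ˢ Z)ᶜ with hsW
  set sV : Finset (Fin d × Fin d) := Zᶜ ×ˢ Zᶜ with hsV
  have key : ∀ X ∈ matSub d sW, ψ X ∈ matSub d sV := by
    intro X hX
    rw [hdec]
    apply Submodule.sum_mem
    intro i _
    by_cases hγi : γ i = 0
    · have hFi : ∀ p q, p ∉ Z → F i p q = 0 ∧ F i q p = 0 :=
        fun p q hp => psd_row_eq_zero (hF i) p (hFdiag i hγi p hp) q
      have : (F i * X).trace = 0 := by
        rw [Matrix.trace]
        apply Finset.sum_eq_zero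
        intro p _
        rw [Matrix.diag_apply, Matrix.mul_apply]
        apply Finset.sum_eq_zero
        intro q _
        by_cases hp : p ∈ Z
        · by_cases hq : q ∈ Z
          · have : X q p = 0 := by
              apply hX (q, p)
              simp [hsW, hq, hp]
            rw [this, mul_zero]
          · rw [(hFi q p hq).2, zero_mul]
        · rw [(hFi p q hp).1, zero_mul]
      rw [this, zero_smul]
      exact Submodule.zero_mem _
    · apply Submodule.smul_mem
      intro pr hpr
      have hor : pr.1 ∈ Z ∨ pr.2 ∈ Z := by
        by_contra hcon
        push_neg at hcon
        exact hpr (by simp [hsV, hcon.1, hcon.2])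
      rcases hor with h | h
      · exact (psd_row_eq_zero (hR i) pr.1 (hRdiag i hγi pr.1 h) pr.2).1
      · exact (psd_row_eq_zero (hR i) pr.2 (hRdiag i hγi pr.2 h) pr.1).2
  have hmap : Submodule.map ψ (matSub d sW) ≤ matSub d sV := by
    rintro _ ⟨X, hX, rfl⟩
    exact key X hX
  have hle : sW.card ≤ sV.card := by
    have e1 : Module.finrank ℂ (matSub d sW) =
        Module.finrank ℂ (Submodule.map ψ (matSub d sW)) :=
      LinearEquiv.finrank_eq (Submodule.equivMapOfInjective ψ hinj _)
    have e2 := Submodule.finrank_mono hmap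
    rw [← e1, finrank_matSub, finrank_matSub] at e2
    exact e2
  set z := Z.card with hz
  set m := Zᶜ.card with hm
  have hzm : z + m = d := by
    rw [hz, hm, Finset.card_add_card_compl, Fintype.card_fin]
  have hz1 : 1 ≤ z := by
    obtain ⟨i, hi⟩ := h0
    exact Finset.card_pos.mpr ⟨i, (hmemZ i).mpr hi⟩
  have hm1 : 1 ≤ m := by
    obtain ⟨i, hi⟩ := h1
    refine Finset.card_pos.mpr ⟨i, ?_⟩
    rw [Finset.mem_compl, hmemZ]
    exact hi
  have hcW : sW.card = d * d - z * z := by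
    rw [hsW, Finset.card_compl, Finset.card_product, Fintype.card_prod, Fintype.card_fin]
  have hcV : sV.card = m * m := by
    rw [hsV, Finset.card_product]
  have hdd : d * d = 2 * (z * m) + m * m + z * z := by
    rw [← hzm]; ring
  have hsub : d * d - z * z = 2 * (z * m) + m * m := by
    rw [hdd]; omega
  rw [hcW, hcV, hsub] at hle
  have : 1 ≤ z * m := Nat.mul_pos hz1 hm1
  omega

/-- A quantum channel with nonzero determinant such that some power has a semipositive
fixed point is entanglement-saving. -/
theorem stmt_6 (d : ℕ) (φ : Matrix (Fin d) (Fin d) ℂ →ₗ[ℂ] Matrix (Fin d) (Fin d) ℂ)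
    (hφ : IsQChannel φ) (hdet : LinearMap.det φ ≠ 0)
    (hsemi : ∃ n ≥ 1, ∃ A : Matrix (Fin d) (Fin d) ℂ,
      A.PosSemidef ∧ A ≠ 0 ∧ A.det = 0 ∧ (φ ^ n) A = A) :
    ∀ N ≥ 1, ¬ MatSep (choi (φ ^ N)) := by
  intro N hN hsep
  obtain ⟨n, hn, A, hApsd, hA0, hAdet, hAfix⟩ := hsemi
  obtain ⟨k, RR, B, hRR, hB, hchoi⟩ := hsep
  obtain ⟨m, rfl⟩ : ∃ m, n = m + 1 := ⟨n - 1, by omega⟩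
  set θ : Matrix (Fin d) (Fin d) ℂ →ₗ[ℂ] Matrix (Fin d) (Fin d) ℂ := φ ^ (N * m) with hθ
  set ψ : Matrix (Fin d) (Fin d) ℂ →ₗ[ℂ] Matrix (Fin d) (Fin d) ℂ := φ ^ (N * (m + 1)) with hψ
  have hcomp : ∀ X, ψ X = θ ((φ ^ N) X) := by
    intro X
    rw [hψ, show N * (m + 1) = N * m + N by ring, pow_add, hθ]
    rfl
  have hact := action_of_choi' (φ ^ N) RR B hchoi
  have hψdec : ∀ X, ψ X = ∑ t, ((B t)ᵀ * X).trace • θ (RR t) := by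
    intro X
    rw [hcomp, hact X, map_sum]
    exact Finset.sum_congr rfl fun t _ => _root_.map_smul θ _ _
  have hψfix : ψ A = A := by
    have key : ∀ j : ℕ, ((φ ^ (m + 1)) ^ j) A = A := by
      intro j
      induction j with
      | zero => simp
      | succ j ih => rw [pow_succ', Module.End.mul_apply, ih, hAfix]
    rw [hψ, mul_comm N (m + 1), pow_mul]
    exact key N
  have hψinj : Function.Injective ψ := by
    have hdetψ : LinearMap.det ψ ≠ 0 := by
      rw [hψ, map_pow]
      exact pow_ne_zero _ hdet
    have hM : IsUnit (LinearMap.toMatrix (Matrix.stdBasis ℂ (Fin d) (Fin d))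
        (Matrix.stdBasis ℂ (Fin d) (Fin d)) ψ) := by
      rw [Matrix.isUnit_iff_isUnit_det, LinearMap.det_toMatrix]
      exact hdetψ.isUnit
    have hUψ : IsUnit ψ := by
      have h2 := hM.map (LinearMap.toMatrixAlgEquiv (Matrix.stdBasis ℂ (Fin d) (Fin d))).symm
      rwa [show LinearMap.toMatrix (Matrix.stdBasis ℂ (Fin d) (Fin d))
          (Matrix.stdBasis ℂ (Fin d) (Fin d)) ψ
          = LinearMap.toMatrixAlgEquiv (Matrix.stdBasis ℂ (Fin d) (Fin d)) ψ from rfl,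
        AlgEquiv.symm_apply_apply] at h2
    exact LinearMap.ker_eq_bot.mp ((LinearMap.isUnit_iff_ker_eq_bot ψ).mp hUψ)
  -- spectral decomposition of A
  have hAH : A.IsHermitian := hApsd.1
  set lam : Fin d → ℝ := hAH.eigenvalues with hlam_def
  set Um : Matrix (Fin d) (Fin d) ℂ := (hAH.eigenvectorUnitary : Matrix (Fin d) (Fin d) ℂ) with hUm
  set S : Matrix (Fin d) (Fin d) ℂ := star Um with hS
  have hU1 : S * Um = 1 := Unitary.coe_star_mul_self _
  have hU2 : Um * S = 1 := Unitary.coe_mul_star_self _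
  set Dg : Matrix (Fin d) (Fin d) ℂ := Matrix.diagonal fun i => (lam i : ℂ) with hDg
  have hspec : A = Um * Dg * S := by
    have h := hAH.spectral_theorem
    rw [Unitary.conjStarAlgAut_apply] at h
    exact h
  have hlamnn : ∀ i, 0 ≤ lam i := hApsd.eigenvalues_nonneg
  have h0 : ∃ i, lam i = 0 := by
    have h := hAH.det_eq_prod_eigenvalues
    rw [hAdet] at h
    obtain ⟨i, _, hi⟩ := Finset.prod_eq_zero_iff.mp h.symm
    exact ⟨i, by rw [hlam_def]; exact RCLike.ofReal_eq_zero.mp hi⟩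
  have h1 : ∃ i, lam i ≠ 0 := by
    by_contra hcon
    push_neg at hcon
    apply hA0
    have : Dg = 0 := by
      rw [hDg]
      ext i j
      by_cases h : i = j
      · subst h; simp [hcon i]
      · simp [Matrix.diagonal_apply_ne _ h]
    rw [hspec, this]
    simp
  -- cancellation helpers
  have hUml : ∀ M : Matrix (Fin d) (Fin d) ℂ, Um * (S * M) = M := by
    intro M; rw [← Matrix.mul_assoc, hU2, Matrix.one_mul]
  have hSl : ∀ M : Matrix (Fin d) (Fin d) ℂ, S * (Um * M) = M := by
    intro M; rw [← Matrix.mul_assoc, hU1, Matrix.one_mul]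
  have hcancel1 : ∀ a : Matrix (Fin d) (Fin d) ℂ, Um * (S * a * Um) * S = a := by
    intro a
    rw [Matrix.mul_assoc S a Um, hUml, Matrix.mul_assoc, hU2, Matrix.mul_one]
  have hcancel2 : ∀ a : Matrix (Fin d) (Fin d) ℂ, S * (Um * a * S) * Um = a := by
    intro a
    rw [Matrix.mul_assoc Um a S, hSl, Matrix.mul_assoc, hU1, Matrix.mul_one]
  -- conjugated map
  set ψ' : Matrix (Fin d) (Fin d) ℂ →ₗ[ℂ] Matrix (Fin d) (Fin d) ℂ :=
    { toFun := fun X => S * ψ (Um * X * S) * Um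
      map_add' := fun X Y => by
        simp [Matrix.mul_add, Matrix.add_mul, map_add]
      map_smul' := fun c X => by
        simp [Matrix.mul_smul, Matrix.smul_mul, _root_.map_smul] } with hψ'
  have hψ'apply : ∀ X, ψ' X = S * ψ (Um * X * S) * Um := fun X => rfl
  have hinj' : Function.Injective ψ' := by
    intro X Y h
    rw [hψ'apply, hψ'apply] at h
    have h2 : ψ (Um * X * S) = ψ (Um * Y * S) := by
      have := congrArg (fun M => Um * M * S) h
      simpa only [hcancel1] using this
    have h3 := hψinj h2
    have := congrArg (fun M => S * M * Um) h3
    simpa only [hcancel2] using this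
  have hdec' : ∀ X, ψ' X = ∑ t, ((S * (B t)ᵀ * Um) * X).trace • (S * θ (RR t) * Um) := by
    intro X
    rw [hψ'apply, hψdec]
    rw [Matrix.mul_sum, Matrix.sum_mul]
    refine Finset.sum_congr rfl fun t _ => ?_
    rw [Matrix.mul_smul, Matrix.smul_mul]
    congr 1
    have hassoc : (B t)ᵀ * (Um * X * S) = ((B t)ᵀ * Um) * X * S := by
      simp only [Matrix.mul_assoc]
    rw [hassoc, Matrix.trace_mul_cycle]
    congr 1
    simp only [Matrix.mul_assoc]
  have hfix' : ψ' Dg = Dg := by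
    rw [hψ'apply, ← hspec, hψfix, hspec]
    exact hcancel2 Dg
  have hSH : Sᴴ = Um := by
    rw [hS, Matrix.star_eq_conjTranspose, conjTranspose_conjTranspose]
  have hF' : ∀ t, (S * (B t)ᵀ * Um).PosSemidef := by
    intro t
    have h := ((hB t).transpose).mul_mul_conjTranspose_same S
    rwa [hSH] at h
  have hR' : ∀ t, (S * θ (RR t) * Um).PosSemidef := by
    intro t
    have hpos : (θ (RR t)).PosSemidef := by
      rw [hθ]
      exact pow_posMap' φ hφ.2 (N * m) (hRR t)
    have h := hpos.mul_mul_conjTranspose_same S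
    rwa [hSH] at h
  exact core_lemma lam hlamnn h0 h1 ψ' hinj'
    (fun t => S * (B t)ᵀ * Um) (fun t => S * θ (RR t) * Um) hF' hR' hdec' hfix'
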